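/- In any exact covering system {a_i mod n_i}_{i=1}^k of ℤ with 2 ≤ n_1 ≤ n_2 ≤ … ≤ n_k and k ≥ 2, the largest modulus n_k is repeated, i.e., n_{k-1} = n_k. -/

import Mathlib

/-- In any exact covering system `{a_i mod n_i}` of `ℤ` with `2 ≤ n 0 ≤ … ≤ n (k-1)`
and `k ≥ 2`, the largest modulus is repeated: `n (k-2) = n (k-1)`. -/
theorem exact_cover_largest_modulus_repeated {k : ℕ} (hk : 2 ≤ k)
    (a : Fin k → ℤ) (n : Fin k → ℕ) (hn : ∀ i, 2 ≤ n i)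
    (hmono : Monotone n)
    (hcover : ∀ x : ℤ, ∃! i : Fin k, (n i : ℤ) ∣ x - a i) :
    n ⟨k - 2, by omega⟩ = n ⟨k - 1, by omega⟩ := by
  by_contra hne
  set j : Fin k := ⟨k - 1, by omega⟩ with hj
  have hlt : ∀ i : Fin k, i ≠ j → n i < n j := by
    intro i hi
    have hik : i.val ≤ k - 2 := by
      have := i.isLt
      by_contra h
      refine hi (Fin.ext ?_)
      simp only [hj]
      omega
    refine lt_of_le_of_lt (hmono ?_) (lt_of_le_of_ne (hmono (Fin.mk_le_mk.mpr (by omega))) hne)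
    exact Fin.le_def.mpr (by simp only [Fin.val_mk]; omega)
  set M := n j with hM
  have hM2 : 2 ≤ M := hn j
  set N := ∏ i, n i with hN
  have hdvd : ∀ i, n i ∣ N := fun i => Finset.dvd_prod_of_mem n (Finset.mem_univ i)
  have hnpos : ∀ i, 0 < n i := fun i => by have := hn i; omega
  have hNpos : 0 < N := Finset.prod_pos fun i _ => hnpos i
  set ζ : ℂ := Complex.exp (2 * Real.pi * Complex.I / M) with hζdef
  have hζ : IsPrimitiveRoot ζ M := Complex.isPrimitiveRoot_exp M (by omega)
  have hζM : ζ ^ M = 1 := hζ.pow_eq_one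
  have hζ1 : ζ ≠ 1 := hζ.ne_one (by omega)
  have hζ0 : ζ ≠ 0 := hζ.ne_zero (by omega)
  -- least nonneg residues
  set r : Fin k → ℕ := fun i => (a i % n i).toNat with hr
  have hrcast : ∀ i, (r i : ℤ) = a i % n i := fun i =>
    Int.toNat_of_nonneg (Int.emod_nonneg _ (by exact_mod_cast (hnpos i).ne'))
  have hrlt : ∀ i, r i < n i := by
    intro i
    have := Int.emod_lt_of_pos (a i) (b := (n i : ℤ)) (by exact_mod_cast hnpos i)
    have h2 := hrcast i
    omega
  have hdvd_iff : ∀ (i : Fin k) (x : ℤ), (n i : ℤ) ∣ x - a i ↔ (n i : ℤ) ∣ x - r i := by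
    intro i x
    have h1 : (n i : ℤ) ∣ (a i - r i) := by
      rw [hrcast i, Int.emod_def]; ring_nf
      exact Dvd.intro _ rfl
    constructor
    · intro h
      have := dvd_add h h1
      simpa [sub_add_sub_cancel] using this
    · intro h
      have := dvd_sub h h1
      have e : x - r i - (a i - r i) = x - a i := by ring
      rwa [e] at this
  -- the filter sets
  have hfilter : ∀ i : Fin k,
      (Finset.range N).filter (fun x : ℕ => (n i : ℤ) ∣ (x : ℤ) - a i)
        = (Finset.range (N / n i)).image (fun t => r i + t * n i) := by
    intro i
    ext x
    simp only [Finset.mem_filter, Finset.mem_range, Finset.mem_image]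
    constructor
    · rintro ⟨hxN, hx⟩
      rw [hdvd_iff] at hx
      obtain ⟨t, ht⟩ := hx
      have ht0 : 0 ≤ t := by
        rcases le_or_gt 0 t with h | h
        · exact h
        · exfalso
          have h1 : (n i : ℤ) * t ≤ -(n i : ℤ) := by
            have : t ≤ -1 := by omega
            nlinarith [hnpos i]
          have h2 : (x : ℤ) - r i = (n i : ℤ) * t := ht
          have := hrlt i
          omega
      have htlt : t < (N / n i : ℕ) := by
        have hNn : ((N / n i : ℕ) : ℤ) * n i = N := by
          exact_mod_cast Nat.div_mul_cancel (hdvd i)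
        have h2 : (n i : ℤ) * t = (x : ℤ) - r i := ht.symm
        by_contra h
        push_neg at h
        have : (n i : ℤ) * ((N / n i : ℕ) : ℤ) ≤ (n i : ℤ) * t := by
          apply mul_le_mul_of_nonneg_left h (by positivity)
        nlinarith
      have h1 : (t.toNat : ℤ) = t := Int.toNat_of_nonneg ht0
      refine ⟨t.toNat, by omega, ?_⟩
      have hx : ((r i + t.toNat * n i : ℕ) : ℤ) = (x : ℤ) := by
        push_cast
        rw [h1]
        linarith
      exact_mod_cast hx
    · rintro ⟨t, htlt, rfl⟩
      constructor
      · have h2 : N / n i * n i = N := Nat.div_mul_cancel (hdvd i)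
        have hNn : n i ≤ N := Nat.le_of_dvd hNpos (hdvd i)
        have h1 : t ≤ N / n i - 1 := by omega
        have hm : t * n i ≤ (N / n i - 1) * n i := Nat.mul_le_mul_right (n i) h1
        have hsub : (N / n i - 1) * n i = N / n i * n i - n i := Nat.sub_one_mul _ _
        have := hrlt i
        omega
      · rw [hdvd_iff]
        refine ⟨t, ?_⟩
        push_cast
        ring
  -- sum decomposition
  have hS : ∑ x ∈ Finset.range N, ζ ^ x
      = ∑ i : Fin k, ∑ x ∈ (Finset.range N).filter (fun x : ℕ => (n i : ℤ) ∣ (x : ℤ) - a i), ζ ^ x := by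
    simp only [Finset.sum_filter]
    rw [Finset.sum_comm]
    apply Finset.sum_congr rfl
    intro x _
    obtain ⟨i₀, hi₀, huniq⟩ := hcover (x : ℤ)
    rw [Finset.sum_eq_single i₀]
    · simp [hi₀]
    · intro b _ hb
      have : ¬ (n b : ℤ) ∣ (x : ℤ) - a b := fun h => hb (huniq b h)
      simp [this]
    · simp
  -- each term
  have hterm : ∀ i : Fin k,
      ∑ x ∈ (Finset.range N).filter (fun x : ℕ => (n i : ℤ) ∣ (x : ℤ) - a i), ζ ^ x
        = ζ ^ r i * ∑ t ∈ Finset.range (N / n i), (ζ ^ n i) ^ t := by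
    intro i
    rw [hfilter i, Finset.sum_image]
    · rw [Finset.mul_sum]
      apply Finset.sum_congr rfl
      intro t _
      rw [pow_add, pow_mul']
    · intro t1 _ t2 _ h
      have := hnpos i
      have : t1 * n i = t2 * n i := by simp only at h; omega
      exact Nat.eq_of_mul_eq_mul_right (hnpos i) this
  -- zero for small moduli
  have hzero : ∀ i : Fin k, i ≠ j →
      ∑ t ∈ Finset.range (N / n i), (ζ ^ n i) ^ t = 0 := by
    intro i hi
    have hne1 : ζ ^ n i ≠ 1 := hζ.pow_ne_one_of_pos_of_lt (hnpos i).ne' (hlt i hi)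
    rw [geom_sum_eq hne1]
    have : (ζ ^ n i) ^ (N / n i) = 1 := by
      rw [← pow_mul, Nat.mul_div_cancel' (hdvd i)]
      obtain ⟨c, hc⟩ := hdvd j
      rw [hc, pow_mul, hζM, one_pow]
    rw [this]
    simp
  -- the j term
  have hjterm : ∑ t ∈ Finset.range (N / n j), (ζ ^ n j) ^ t = (N / M : ℕ) := by
    rw [← hM, hζM]
    simp
  have hMdvd : 1 ≤ N / M := Nat.one_le_div_iff (by omega) |>.mpr (Nat.le_of_dvd hNpos (hdvd j))
  -- total sum is zero
  have hStot : ∑ x ∈ Finset.range N, ζ ^ x = 0 := by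
    rw [geom_sum_eq hζ1]
    have : ζ ^ N = 1 := by
      obtain ⟨c, hc⟩ := hdvd j
      rw [hc, pow_mul, hζM, one_pow]
    rw [this]
    simp
  rw [hS] at hStot
  rw [Finset.sum_eq_single j] at hStot
  · rw [hterm j, hjterm] at hStot
    have : (ζ : ℂ) ^ r j ≠ 0 := pow_ne_zero _ hζ0
    have hN0 : ((N / M : ℕ) : ℂ) ≠ 0 := by
      simp only [ne_eq, Nat.cast_eq_zero]
      omega
    exact (mul_ne_zero this hN0) hStot
  · intro i _ hi
    rw [hterm i, hzero i hi, mul_zero]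
  · simp
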